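/- The Gibbs fixed point is a mixed Nash equilibrium: Let f be continuous on 𝕋^n × 𝕋^n and let μ* = ρ* dx, ν* = η* dx be probability measures on 𝕋^n satisfying ρ*(x) = e^{−V_{ν*}(x)} / ∫ e^{−V_{ν*}} dx and η*(y) = e^{U_{μ*}(y)} / ∫ e^{U_{μ*}} dy, where U_μ(y) = ∫ f(x,y) dμ(x) and V_ν(x) = ∫ f(x,y) dν(y). Then for all μ, ν ∈ 𝒫(𝕋^n), F(μ*, ν) ≤ F(μ*, ν*) ≤ F(μ, ν*); in particular NI(μ*, ν*) = 0. -/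

import Mathlib

open MeasureTheory


/-- The flat torus `ℝⁿ/ℤⁿ`, modeled as a product of circles of length `1`, equipped with
its (probability) Haar/Lebesgue measure `volume`. -/
abbrev Torus (n : ℕ) := Fin n → AddCircle (1 : ℝ)

/-- The density of a measure on the torus with respect to the Lebesgue (probability) measure. -/
noncomputable def density {n : ℕ} (ν : Measure (Torus n)) : Torus n → ℝ :=
  fun x => (ν.rnDeriv volume x).toReal

/-- A measure has finite entropy `H(ν) = ∫ ρ log ρ dx < ∞` iff it is absolutely continuous with
respect to Lebesgue measure and `ρ log ρ` is integrable. -/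
def entAdmissible {n : ℕ} (ν : Measure (Torus n)) : Prop :=
  ν ≪ (volume : Measure (Torus n)) ∧
    Integrable (fun x => density ν x * Real.log (density ν x)) (volume : Measure (Torus n))

/-- The (negative) entropy `H(ν) = ∫ ρ log ρ dx` of an absolutely continuous measure. -/
noncomputable def Hent {n : ℕ} (ν : Measure (Torus n)) : ℝ :=
  ∫ x, density ν x * Real.log (density ν x)

open Classical in
/-- The payoff functional `F(μ,ν) = ∬ f dμ dν + H(μ) − H(ν)`, as an extended real number:
it equals `−∞ = ⊥` when `H(ν) = +∞` (and `H(μ) < ∞`), and `+∞ = ⊤` when `H(μ) = +∞`. -/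
noncomputable def Fval {n : ℕ} (f : Torus n → Torus n → ℝ) (μ ν : Measure (Torus n)) : EReal :=
  if entAdmissible μ then
    (if entAdmissible ν then (((∫ x, ∫ y, f x y ∂ν ∂μ) + Hent μ - Hent ν : ℝ) : EReal) else ⊥)
  else ⊤

/-- The Nikaido–Isoda error `NI(μ,ν) = sup_{ν'} F(μ,ν') − inf_{μ'} F(μ',ν)`, the suprema and
infima being taken over all Borel probability measures on the torus. -/
noncomputable def NIval {n : ℕ} (f : Torus n → Torus n → ℝ) (μ ν : Measure (Torus n)) : EReal :=
  (⨆ ν' ∈ {m : Measure (Torus n) | IsProbabilityMeasure m}, Fval f μ ν')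
    - (⨅ μ' ∈ {m : Measure (Torus n) | IsProbabilityMeasure m}, Fval f μ' ν)

/- ### Auxiliary lemmas -/

instance : IsProbabilityMeasure (volume : Measure (AddCircle (1 : ℝ))) :=
  ⟨by rw [AddCircle.measure_univ]; norm_num⟩

instance (n : ℕ) : IsProbabilityMeasure (volume : Measure (Torus n)) := by
  rw [show (volume : Measure (Torus n)) = Measure.pi (fun _ => volume) from rfl]
  infer_instance

/-- Continuous functions on the torus are integrable. -/
lemma torus_int {n : ℕ} {g : Torus n → ℝ} (hg : Continuous g) :
    Integrable g (volume : Measure (Torus n)) :=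
  hg.integrable_of_hasCompactSupport (HasCompactSupport.of_compactSpace g)

/-- Continuous functions on the torus are bounded. -/
lemma torus_bdd {n : ℕ} {g : Torus n → ℝ} (hg : Continuous g) :
    ∃ C, ∀ x, ‖g x‖ ≤ C := by
  obtain ⟨C, hC⟩ := isCompact_univ.exists_bound_of_continuousOn hg.continuousOn
  exact ⟨C, fun x => hC x (Set.mem_univ x)⟩

/-- The elementary entropy inequality `t − h ≤ t log t − t log h` for `t ≥ 0`, `h > 0`. -/
lemma ent_ineq {t h : ℝ} (ht : 0 ≤ t) (hh : 0 < h) :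
    t - h ≤ t * Real.log t - t * Real.log h := by
  rcases ht.eq_or_lt with h0 | htpos
  · rw [← h0]; simp [hh.le]
  · have h1 : Real.log h - Real.log t ≤ h / t - 1 := by
      rw [← Real.log_div hh.ne' htpos.ne']
      exact Real.log_le_sub_one_of_pos (div_pos hh htpos)
    have h2 : t * (Real.log h - Real.log t) ≤ t * (h / t - 1) :=
      mul_le_mul_of_nonneg_left h1 htpos.le
    have h3 : t * (h / t - 1) = h - t := by field_simp
    nlinarith

/-- The total mass of the Gibbs density `e^W / ∫ e^W` is one. -/
lemma gibbs_mass {n : ℕ} (W : Torus n → ℝ) (hW : Continuous W) :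
    ∫ y, Real.exp (W y) / (∫ z, Real.exp (W z)) ∂(volume : Measure (Torus n)) = 1 := by
  have hZpos : 0 < ∫ z, Real.exp (W z) ∂(volume : Measure (Torus n)) :=
    integral_exp_pos (torus_int (Real.continuous_exp.comp hW))
  rw [integral_div]
  exact div_self hZpos.ne'

/-- the density of a measure integrates to `1`. -/
lemma density_mass {n : ℕ} (ν : Measure (Torus n)) [IsProbabilityMeasure ν]
    (hac : ν ≪ (volume : Measure (Torus n))) :
    ∫ x, density ν x ∂(volume : Measure (Torus n)) = 1 := by
  have h := Measure.integral_toReal_rnDeriv hac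
  simpa [density, measure_univ] using h

/-- **Gibbs variational inequality.** For every admissible probability measure `ν`,
`∫ W dν − H(ν) ≤ log ∫ e^W`. -/
lemma gibbs_core {n : ℕ} (W : Torus n → ℝ) (hW : Continuous W)
    (ν : Measure (Torus n)) [IsProbabilityMeasure ν] (hadm : entAdmissible ν) :
    (∫ y, W y ∂ν) - Hent ν ≤ Real.log (∫ z, Real.exp (W z)) := by
  obtain ⟨hac, hint⟩ := hadm
  set Z : ℝ := ∫ z, Real.exp (W z) with hZ
  have hZpos : 0 < Z := integral_exp_pos (torus_int (Real.continuous_exp.comp hW))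
  set η : Torus n → ℝ := fun y => Real.exp (W y) / Z with hη
  have hηc : Continuous η := (Real.continuous_exp.comp hW).div_const Z
  have hηpos : ∀ y, 0 < η y := fun y => div_pos (Real.exp_pos _) hZpos
  have hηlog : ∀ y, Real.log (η y) = W y - Real.log Z := fun y => by
    rw [hη]; rw [Real.log_div (Real.exp_ne_zero _) hZpos.ne', Real.log_exp]
  set g : Torus n → ℝ := density ν with hg
  have hgnn : ∀ x, 0 ≤ g x := fun x => ENNReal.toReal_nonneg
  have hgint : Integrable g (volume : Measure (Torus n)) :=
    Measure.integrable_toReal_rnDeriv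
  have hgone : ∫ x, g x ∂(volume : Measure (Torus n)) = 1 := density_mass ν hac
  obtain ⟨CW, hCW⟩ := torus_bdd hW
  -- integrabilities
  have iWg : Integrable (fun x => W x * g x) (volume : Measure (Torus n)) :=
    hgint.bdd_mul hW.aestronglyMeasurable (Filter.Eventually.of_forall hCW)
  have iZg : Integrable (fun x => Real.log Z * g x) (volume : Measure (Torus n)) :=
    hgint.const_mul _
  have iglogg : Integrable (fun x => g x * Real.log (g x)) (volume : Measure (Torus n)) := hint
  have iη : Integrable η (volume : Measure (Torus n)) := torus_int hηc
  have iLHS : Integrable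
      (fun x => g x * Real.log (g x) - W x * g x + Real.log Z * g x)
      (volume : Measure (Torus n)) := (iglogg.sub iWg).add iZg
  have iRHS : Integrable (fun x => g x - η x) (volume : Measure (Torus n)) := hgint.sub iη
  -- pointwise inequality
  have hptwise : ∀ x, g x - η x
      ≤ g x * Real.log (g x) - W x * g x + Real.log Z * g x := by
    intro x
    have := ent_ineq (hgnn x) (hηpos x)
    rw [hηlog x] at this
    nlinarith [this]
  have hmono := integral_mono iRHS iLHS hptwise
  have hRHS : ∫ x, (g x - η x) ∂(volume : Measure (Torus n)) = 0 := by
    rw [integral_sub hgint iη, hgone, hη]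
    rw [gibbs_mass W hW]
    ring
  have hLHS : ∫ x, (g x * Real.log (g x) - W x * g x + Real.log Z * g x)
        ∂(volume : Measure (Torus n))
      = Hent ν - (∫ x, W x * g x ∂(volume : Measure (Torus n))) + Real.log Z := by
    have i1 : Integrable (fun x => g x * Real.log (g x) - W x * g x)
        (volume : Measure (Torus n)) := iglogg.sub iWg
    rw [integral_add i1 iZg, integral_sub iglogg iWg,
      integral_const_mul, hgone]
    simp only [Hent, hg]
    ring
  have hWdν : ∫ y, W y ∂ν = ∫ x, W x * g x ∂(volume : Measure (Torus n)) := by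
    rw [← integral_rnDeriv_smul hac (f := W)]
    congr 1
    ext x
    simp [hg, density, mul_comm]
  rw [hWdν]
  rw [hRHS, hLHS] at hmono
  linarith

/-- **Gibbs equality.** The Gibbs measure with potential `W` is admissible and achieves
`∫ W dν − H(ν) = log ∫ e^W`. -/
lemma gibbs_eq {n : ℕ} (W : Torus n → ℝ) (hW : Continuous W) (η : Torus n → ℝ)
    (hη : ∀ y, η y = Real.exp (W y) / ∫ z, Real.exp (W z)) :
    entAdmissible (volume.withDensity fun y => ENNReal.ofReal (η y)) ∧
      (∫ y, W y ∂(volume.withDensity fun y => ENNReal.ofReal (η y)))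
          - Hent (volume.withDensity fun y => ENNReal.ofReal (η y))
        = Real.log (∫ z, Real.exp (W z)) := by
  have hηdef : η = fun y => Real.exp (W y) / ∫ z, Real.exp (W z) := funext hη
  set Z : ℝ := ∫ z, Real.exp (W z) with hZ
  have hZpos : 0 < Z := integral_exp_pos (torus_int (Real.continuous_exp.comp hW))
  have hηc : Continuous η := by
    rw [hηdef]; exact (Real.continuous_exp.comp hW).div_const Z
  have hηpos : ∀ y, 0 < η y := fun y => by
    rw [hη y]; exact div_pos (Real.exp_pos _) hZpos
  have hηlog : ∀ y, Real.log (η y) = W y - Real.log Z := fun y => by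
    rw [hη y, Real.log_div (Real.exp_ne_zero _) hZpos.ne', Real.log_exp]
  have hηlogc : Continuous fun y => Real.log (η y) := by
    have : (fun y => Real.log (η y)) = fun y => W y - Real.log Z := funext hηlog
    rw [this]; exact hW.sub continuous_const
  set νW : Measure (Torus n) := volume.withDensity fun y => ENNReal.ofReal (η y) with hνW
  have hmeas : Measurable fun y => ENNReal.ofReal (η y) :=
    ENNReal.measurable_ofReal.comp hηc.measurable
  have hac : νW ≪ (volume : Measure (Torus n)) := withDensity_absolutelyContinuous _ _
  have hdens : (fun y => density νW y) =ᵐ[(volume : Measure (Torus n))] η := by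
    filter_upwards [Measure.rnDeriv_withDensity (volume : Measure (Torus n)) hmeas] with y hy
    rw [density, hy, ENNReal.toReal_ofReal (hηpos y).le]
  have hdenslog : (fun y => density νW y * Real.log (density νW y))
      =ᵐ[(volume : Measure (Torus n))] fun y => η y * Real.log (η y) := by
    filter_upwards [hdens] with y hy
    rw [hy]
  have hadm : entAdmissible νW := by
    refine ⟨hac, ?_⟩
    exact (torus_int (hηc.mul hηlogc)).congr hdenslog.symm
  refine ⟨hadm, ?_⟩
  have hHent : Hent νW = ∫ y, η y * Real.log (η y) ∂(volume : Measure (Torus n)) :=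
    integral_congr_ae hdenslog
  have hWdν : ∫ y, W y ∂νW = ∫ y, η y * W y ∂(volume : Measure (Torus n)) := by
    rw [← integral_rnDeriv_smul hac (f := W)]
    refine integral_congr_ae ?_
    filter_upwards [hdens] with y hy
    rw [smul_eq_mul]
    exact congrArg (· * W y) hy
  have hmass : ∫ y, η y ∂(volume : Measure (Torus n)) = 1 := by
    rw [hηdef]; exact gibbs_mass W hW
  obtain ⟨CW, hCW⟩ := torus_bdd hW
  have iηW : Integrable (fun y => η y * W y) (volume : Measure (Torus n)) :=
    torus_int (hηc.mul hW)
  have iηZ : Integrable (fun y => η y * Real.log Z) (volume : Measure (Torus n)) :=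
    torus_int (hηc.mul continuous_const)
  have hηloggexp : (fun y => η y * Real.log (η y))
      = fun y => η y * W y - η y * Real.log Z := by
    funext y
    rw [hηlog y]; ring
  rw [hWdν, hHent, hηloggexp, integral_sub iηW iηZ]
  have : ∫ y, η y * Real.log Z ∂(volume : Measure (Torus n)) = Real.log Z := by
    rw [integral_mul_const, hmass, one_mul]
  rw [this]
  ring

/-- **The Gibbs fixed point is a mixed Nash equilibrium.** If `μ* = ρ* dx` and `ν* = η* dx`
satisfy the Gibbs fixed-point relations `ρ* = e^{−V_{ν*}}/∫e^{−V_{ν*}}` and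
`η* = e^{U_{μ*}}/∫e^{U_{μ*}}`, then `F(μ*,ν) ≤ F(μ*,ν*) ≤ F(μ,ν*)` for all probability
measures `μ, ν`; in particular `NI(μ*,ν*) = 0`. -/
theorem stmt15 (n : ℕ) (f : Torus n → Torus n → ℝ)
    (hf : Continuous fun p : Torus n × Torus n => f p.1 p.2)
    (ρstar ηstar : Torus n → ℝ) (hρm : Measurable ρstar) (hηm : Measurable ηstar)
    (hμstar : IsProbabilityMeasure (volume.withDensity fun x => ENNReal.ofReal (ρstar x)))
    (hνstar : IsProbabilityMeasure (volume.withDensity fun y => ENNReal.ofReal (ηstar y)))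
    (hρfix : ∀ x, ρstar x
        = Real.exp (-(∫ y, f x y ∂(volume.withDensity fun y' => ENNReal.ofReal (ηstar y'))))
          / ∫ z, Real.exp (-(∫ y, f z y ∂(volume.withDensity fun y' => ENNReal.ofReal (ηstar y')))))
    (hηfix : ∀ y, ηstar y
        = Real.exp (∫ x, f x y ∂(volume.withDensity fun x' => ENNReal.ofReal (ρstar x')))
          / ∫ z, Real.exp (∫ x, f x z ∂(volume.withDensity fun x' => ENNReal.ofReal (ρstar x')))) :
    (∀ μ ν : Measure (Torus n), IsProbabilityMeasure μ → IsProbabilityMeasure ν →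
        Fval f (volume.withDensity fun x => ENNReal.ofReal (ρstar x)) ν
          ≤ Fval f (volume.withDensity fun x => ENNReal.ofReal (ρstar x))
              (volume.withDensity fun y => ENNReal.ofReal (ηstar y)) ∧
        Fval f (volume.withDensity fun x => ENNReal.ofReal (ρstar x))
            (volume.withDensity fun y => ENNReal.ofReal (ηstar y))
          ≤ Fval f μ (volume.withDensity fun y => ENNReal.ofReal (ηstar y)))
    ∧ NIval f (volume.withDensity fun x => ENNReal.ofReal (ρstar x))
        (volume.withDensity fun y => ENNReal.ofReal (ηstar y)) = (0 : EReal) := by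
  set μs : Measure (Torus n) := volume.withDensity fun x => ENNReal.ofReal (ρstar x) with hμs
  set νs : Measure (Torus n) := volume.withDensity fun y => ENNReal.ofReal (ηstar y) with hνs
  -- potentials
  set U : Torus n → ℝ := fun y => ∫ x, f x y ∂μs with hU
  set V : Torus n → ℝ := fun x => ∫ y, f x y ∂νs with hV
  obtain ⟨C, hC⟩ : ∃ C, ∀ p : Torus n × Torus n, ‖f p.1 p.2‖ ≤ C := by
    obtain ⟨C, hC⟩ := isCompact_univ.exists_bound_of_continuousOn hf.continuousOn
    exact ⟨C, fun p => hC p (Set.mem_univ p)⟩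
  have hUc : Continuous U := by
    apply continuous_of_dominated (bound := fun _ => C)
    · intro y
      exact (hf.comp (continuous_id.prodMk continuous_const)).aestronglyMeasurable
    · intro y
      exact Filter.Eventually.of_forall fun x => hC (x, y)
    · exact integrable_const C
    · exact Filter.Eventually.of_forall fun x =>
        hf.comp (continuous_const.prodMk continuous_id)
  have hVc : Continuous V := by
    apply continuous_of_dominated (bound := fun _ => C)
    · intro x
      exact (hf.comp (continuous_const.prodMk continuous_id)).aestronglyMeasurable
    · intro x
      exact Filter.Eventually.of_forall fun y => hC (x, y)
    · exact integrable_const C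
    · exact Filter.Eventually.of_forall fun y =>
        hf.comp (continuous_id.prodMk continuous_const)
  -- Gibbs equalities for the fixed points
  have hμeq := gibbs_eq (fun x => -(V x)) hVc.neg ρstar hρfix
  have hνeq := gibbs_eq U hUc ηstar hηfix
  have hadmμ : entAdmissible μs := hμeq.1
  have hadmν : entAdmissible νs := hνeq.1
  -- Fubini
  have hswap : ∀ (ν : Measure (Torus n)), IsProbabilityMeasure ν →
      ∫ x, ∫ y, f x y ∂ν ∂μs = ∫ y, U y ∂ν := by
    intro ν hν
    have hint : Integrable (Function.uncurry f) (μs.prod ν) :=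
      hf.integrable_of_hasCompactSupport (HasCompactSupport.of_compactSpace _)
    exact integral_integral_swap hint
  -- main inequalities (in ℝ)
  have key1 : ∀ (ν : Measure (Torus n)), IsProbabilityMeasure ν → entAdmissible ν →
      (∫ x, ∫ y, f x y ∂ν ∂μs) + Hent μs - Hent ν
        ≤ (∫ x, ∫ y, f x y ∂νs ∂μs) + Hent μs - Hent νs := by
    intro ν hν hadm
    have h1 : (∫ y, U y ∂ν) - Hent ν ≤ Real.log (∫ z, Real.exp (U z)) :=
      gibbs_core U hUc ν hadm
    have h2 : (∫ y, U y ∂νs) - Hent νs = Real.log (∫ z, Real.exp (U z)) := hνeq.2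
    rw [hswap ν hν, hswap νs hνstar]
    linarith
  have key2 : ∀ (μ : Measure (Torus n)), IsProbabilityMeasure μ → entAdmissible μ →
      (∫ x, ∫ y, f x y ∂νs ∂μs) + Hent μs - Hent νs
        ≤ (∫ x, ∫ y, f x y ∂νs ∂μ) + Hent μ - Hent νs := by
    intro μ hμ hadm
    have h1 : (∫ x, -(V x) ∂μ) - Hent μ ≤ Real.log (∫ z, Real.exp (-(V z))) :=
      gibbs_core _ hVc.neg μ hadm
    have h2 : (∫ x, -(V x) ∂μs) - Hent μs = Real.log (∫ z, Real.exp (-(V z))) := hμeq.2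
    have e1 : ∫ x, ∫ y, f x y ∂νs ∂μ = -∫ x, -(V x) ∂μ := by
      rw [integral_neg]; simp [hV]
    have e2 : ∫ x, ∫ y, f x y ∂νs ∂μs = -∫ x, -(V x) ∂μs := by
      rw [integral_neg]; simp [hV]
    rw [e1, e2]
    linarith
  have hmain : ∀ μ ν : Measure (Torus n), IsProbabilityMeasure μ → IsProbabilityMeasure ν →
      Fval f μs ν ≤ Fval f μs νs ∧ Fval f μs νs ≤ Fval f μ νs := by
    intro μ ν hμ hν
    constructor
    · unfold Fval
      rw [if_pos hadmμ, if_pos hadmμ, if_pos hadmν]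
      by_cases hadm : entAdmissible ν
      · rw [if_pos hadm]
        exact EReal.coe_le_coe_iff.mpr (key1 ν hν hadm)
      · rw [if_neg hadm]
        exact bot_le
    · unfold Fval
      by_cases hadm : entAdmissible μ
      · rw [if_pos hadmμ, if_pos hadm, if_pos hadmν, if_pos hadmν]
        exact EReal.coe_le_coe_iff.mpr (key2 μ hμ hadm)
      · rw [if_neg hadm]
        exact le_top
  refine ⟨hmain, ?_⟩
  -- the Nikaido–Isoda error vanishes
  have hsup : (⨆ ν' ∈ {m : Measure (Torus n) | IsProbabilityMeasure m}, Fval f μs ν')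
      = Fval f μs νs := by
    apply le_antisymm
    · exact iSup₂_le fun ν' hν' => (hmain μs ν' hμstar hν').1
    · exact le_iSup₂ (f := fun ν' (_ : ν' ∈ {m : Measure (Torus n) | IsProbabilityMeasure m})
        => Fval f μs ν') νs hνstar
  have hinf : (⨅ μ' ∈ {m : Measure (Torus n) | IsProbabilityMeasure m}, Fval f μ' νs)
      = Fval f μs νs := by
    apply le_antisymm
    · exact iInf₂_le μs hμstar
    · exact le_iInf₂ fun μ' hμ' => (hmain μ' νs hμ' hνstar).2
  have hreal : Fval f μs νs
      = (((∫ x, ∫ y, f x y ∂νs ∂μs) + Hent μs - Hent νs : ℝ) : EReal) := by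
    unfold Fval
    rw [if_pos hadmμ, if_pos hadmν]
  rw [NIval, hsup, hinf, hreal, ← EReal.coe_sub]
  simp
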